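/- For every τ in the upper half-plane ℍ, the function v ↦ θ(v,τ) is complex-differentiable at v = 0 and its derivative there equals θ'(0,τ) = 2π · q^{1/8} · ∏_{r=1}^∞ (1 − q^r)³. -/

import Mathlib

open Complex Filter Topology

/-- `qpow τ s = e^{2πisτ}`, i.e. "q^s" where `q = e^{2πiτ}`. -/
noncomputable def qpow (τ s : ℂ) : ℂ := Complex.exp (2 * Real.pi * I * s * τ)

/-- `c(τ) = ∏_{r=1}^∞ (1 - q^r)`. -/
noncomputable def cInf (τ : ℂ) : ℂ := ∏' r : ℕ, (1 - qpow τ (r + 1))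

/-- Jacobi theta function θ. -/
noncomputable def jTheta (v τ : ℂ) : ℂ :=
  cInf τ * qpow τ (1 / 8) * (2 * Complex.sin (Real.pi * v)) *
    ∏' r : ℕ, ((1 - qpow τ (r + 1) * Complex.exp (2 * Real.pi * I * v)) *
      (1 - qpow τ (r + 1) * Complex.exp (-(2 * Real.pi * I * v))))

/-- Jacobi theta function θ₁. -/
noncomputable def jTheta1 (v τ : ℂ) : ℂ :=
  cInf τ * qpow τ (1 / 8) * (2 * Complex.cos (Real.pi * v)) *
    ∏' r : ℕ, ((1 + qpow τ (r + 1) * Complex.exp (2 * Real.pi * I * v)) *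
      (1 + qpow τ (r + 1) * Complex.exp (-(2 * Real.pi * I * v))))

/-- Jacobi theta function θ₂. -/
noncomputable def jTheta2 (v τ : ℂ) : ℂ :=
  cInf τ *
    ∏' r : ℕ, ((1 - qpow τ ((r : ℂ) + 1 / 2) * Complex.exp (2 * Real.pi * I * v)) *
      (1 - qpow τ ((r : ℂ) + 1 / 2) * Complex.exp (-(2 * Real.pi * I * v))))

/-- Jacobi theta function θ₃. -/
noncomputable def jTheta3 (v τ : ℂ) : ℂ :=
  cInf τ *
    ∏' r : ℕ, ((1 + qpow τ ((r : ℂ) + 1 / 2) * Complex.exp (2 * Real.pi * I * v)) *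
      (1 + qpow τ ((r : ℂ) + 1 / 2) * Complex.exp (-(2 * Real.pi * I * v))))

/-- θ'(0,τ), the derivative of `v ↦ θ(v,τ)` at `v = 0`. -/
noncomputable def jThetaDeriv (τ : ℂ) : ℂ := deriv (fun v => jTheta v τ) 0

lemma norm_qpow_nat (τ : ℂ) (r : ℕ) :
    ‖qpow τ ((r : ℂ) + 1)‖ = Real.exp (-(2 * Real.pi * (r + 1) * τ.im)) := by
  rw [qpow, Complex.norm_exp]
  congr 1
  simp [Complex.mul_re, Complex.mul_im]

lemma re_two_pi_I (v : ℂ) : (2 * (Real.pi : ℂ) * I * v).re = -(2 * Real.pi * v.im) := by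
  simp [Complex.mul_re, Complex.mul_im]

/-- the value of θ'(0,τ) as an infinite product. -/
theorem jTheta_hasDerivAt_zero (τ : ℂ) (hτ : 0 < τ.im) :
    HasDerivAt (fun v => jTheta v τ)
      (2 * (Real.pi : ℂ) * qpow τ (1 / 8) * ∏' r : ℕ, (1 - qpow τ (r + 1)) ^ 3) 0 := by
  set y := τ.im with hy
  have hπ : (0:ℝ) < Real.pi := Real.pi_pos
  set K : ℝ := Real.exp (-(Real.pi * y)) with hKdef
  set ρ : ℝ := Real.exp (-(2 * Real.pi * y)) with hρdef
  have hK1 : K < 1 := Real.exp_lt_one_iff.2 (by nlinarith)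
  have hK0 : 0 < K := Real.exp_pos _
  have hρ1 : ρ < 1 := Real.exp_lt_one_iff.2 (by nlinarith)
  have hρ0 : (0:ℝ) ≤ ρ := (Real.exp_pos _).le
  set C : ℝ := K * (1 - K)⁻¹ / 2 + 1 with hCdef
  have h1K : (0:ℝ) < 1 - K := by linarith
  have hC0 : (0:ℝ) < C := by
    have : 0 ≤ K * (1 - K)⁻¹ / 2 :=
      div_nonneg (mul_nonneg hK0.le (inv_nonneg.2 h1K.le)) two_pos.le
    rw [hCdef]
    linarith
  -- key norm bound
  have key : ∀ (r : ℕ) (z : ℂ), z.re ≤ Real.pi * y →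
      ‖qpow τ ((r : ℂ) + 1) * Complex.exp z‖ ≤ K * ρ ^ r := by
    intro r z hz
    rw [norm_mul, norm_qpow_nat, Complex.norm_exp, ← Real.exp_add]
    have : K * ρ ^ r = Real.exp (-(Real.pi * y) + r * (-(2 * Real.pi * y))) := by
      rw [Real.exp_add, Real.exp_nat_mul]
    rw [this]
    apply Real.exp_le_exp.2
    push_cast
    nlinarith [hz]
  have hKρK : ∀ r : ℕ, K * ρ ^ r ≤ K := by
    intro r
    calc K * ρ ^ r ≤ K * 1 := by
          exact mul_le_mul_of_nonneg_left (pow_le_one₀ hρ0 hρ1.le) hK0.le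
      _ = K := mul_one K
  -- norm of plain qpow
  have keyq : ∀ r : ℕ, ‖qpow τ ((r : ℂ) + 1)‖ ≤ K * ρ ^ r := by
    intro r
    have := key r 0 (by positivity)
    simpa using this
  -- log bound
  have logb : ∀ w : ℂ, ‖w‖ ≤ K * ρ ^ 0 → True := fun _ _ => trivial
  have hlog : ∀ (w : ℂ), ‖w‖ ≤ K → ‖Complex.log (1 - w)‖ ≤ C * ‖w‖ := by
    intro w hw
    have hw1 : ‖(-w)‖ < 1 := by rw [norm_neg]; exact lt_of_le_of_lt hw hK1
    have h := Complex.norm_log_one_add_le hw1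
    rw [show (1 : ℂ) + -w = 1 - w by ring] at h
    rw [norm_neg] at h
    refine h.trans ?_
    have h1 : (1 - ‖w‖)⁻¹ ≤ (1 - K)⁻¹ := by
      apply inv_anti₀ (by linarith) (by linarith)
    have h2 : ‖w‖ ^ 2 * (1 - ‖w‖)⁻¹ / 2 ≤ ‖w‖ * (K * (1 - K)⁻¹ / 2) := by
      have : ‖w‖ ^ 2 * (1 - ‖w‖)⁻¹ ≤ ‖w‖ * (K * (1 - K)⁻¹) := by
        have hwpos : (0:ℝ) ≤ ‖w‖ := norm_nonneg w
        calc ‖w‖ ^ 2 * (1 - ‖w‖)⁻¹ = ‖w‖ * (‖w‖ * (1 - ‖w‖)⁻¹) := by ring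
          _ ≤ ‖w‖ * (K * (1 - K)⁻¹) := by
              apply mul_le_mul_of_nonneg_left _ hwpos
              exact mul_le_mul hw h1 (inv_nonneg.2 (by linarith)) hK0.le
      linarith
    calc ‖w‖ ^ 2 * (1 - ‖w‖)⁻¹ / 2 + ‖w‖ ≤ ‖w‖ * (K * (1 - K)⁻¹ / 2) + ‖w‖ := by linarith
      _ = C * ‖w‖ := by rw [hCdef]; ring
  -- nonvanishing
  have hne : ∀ w : ℂ, ‖w‖ ≤ K → 1 - w ≠ 0 := by
    intro w hw h0
    rw [sub_eq_zero] at h0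
    rw [← h0] at hw
    simp at hw
    linarith
  -- the summable bound
  have hgeo : Summable (fun r : ℕ => K * ρ ^ r) :=
    (summable_geometric_of_lt_one hρ0 hρ1).mul_left K
  have hu : Summable (fun r : ℕ => 2 * C * (K * ρ ^ r)) := hgeo.mul_left _
  have hu1 : Summable (fun r : ℕ => C * (K * ρ ^ r)) := hgeo.mul_left _
  -- S and basic products
  set S : ℂ := ∑' r : ℕ, Complex.log (1 - qpow τ ((r : ℂ) + 1)) with hSdef
  have hSsum : Summable (fun r : ℕ => Complex.log (1 - qpow τ ((r : ℂ) + 1))) := by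
    apply Summable.of_norm_bounded hu1
    intro r
    refine (hlog _ ((keyq r).trans (hKρK r))).trans ?_
    exact mul_le_mul_of_nonneg_left (keyq r) hC0.le
  have hneq : ∀ r : ℕ, 1 - qpow τ ((r : ℂ) + 1) ≠ 0 :=
    fun r => hne _ ((keyq r).trans (hKρK r))
  have hprodc : HasProd (fun r : ℕ => (1 - qpow τ ((r : ℂ) + 1))) (Complex.exp S) := by
    have h := hSsum.hasSum.cexp
    have heq : (cexp ∘ fun r : ℕ => Complex.log (1 - qpow τ ((r : ℂ) + 1))) =
        fun r : ℕ => 1 - qpow τ ((r : ℂ) + 1) :=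
      funext fun r => Complex.exp_log (hneq r)
    rwa [heq] at h
  have hcInf : cInf τ = Complex.exp S := by
    rw [cInf]; exact hprodc.tprod_eq
  -- cube product
  have hprod3 : HasProd (fun r : ℕ => (1 - qpow τ ((r : ℂ) + 1)) ^ 3)
      (Complex.exp (3 * S)) := by
    have h := ((hSsum.hasSum.mul_left (3 : ℂ))).cexp
    have heq : (cexp ∘ fun r : ℕ => (3 : ℂ) * Complex.log (1 - qpow τ ((r : ℂ) + 1))) =
        fun r : ℕ => (1 - qpow τ ((r : ℂ) + 1)) ^ 3 := by
      funext r
      show cexp ((3 : ℂ) * _) = _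
      rw [show ((3 : ℂ)) = ((3 : ℕ) : ℂ) by norm_num, Complex.exp_nat_mul,
        Complex.exp_log (hneq r)]
    rwa [heq] at h
  -- the ball and pointwise bounds
  set B : Set ℂ := Metric.ball (0 : ℂ) (y / 2) with hBdef
  have hBmem : B ∈ 𝓝 (0 : ℂ) := Metric.ball_mem_nhds 0 (by positivity)
  have hre : ∀ v ∈ B, (2 * (Real.pi : ℂ) * I * v).re ≤ Real.pi * y ∧
      (-(2 * (Real.pi : ℂ) * I * v)).re ≤ Real.pi * y := by
    intro v hv
    have hnv : ‖v‖ < y / 2 := by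
      simpa [hBdef, mem_ball_zero_iff] using hv
    have him : |v.im| ≤ ‖v‖ := by
      exact Complex.abs_im_le_norm v
    have h1 : -v.im ≤ y / 2 := by
      have := neg_abs_le v.im
      linarith
    have h2 : v.im ≤ y / 2 := by
      have := le_abs_self v.im
      linarith
    constructor
    · rw [re_two_pi_I]
      nlinarith
    · rw [Complex.neg_re, re_two_pi_I]
      nlinarith
  set h : ℕ → ℂ → ℂ := fun r v =>
    Complex.log (1 - qpow τ ((r : ℂ) + 1) * Complex.exp (2 * (Real.pi : ℂ) * I * v)) +
      Complex.log (1 - qpow τ ((r : ℂ) + 1) * Complex.exp (-(2 * (Real.pi : ℂ) * I * v)))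
    with hhdef
  set L : ℂ → ℂ := fun v => ∑' r : ℕ, h r v with hLdef
  have hb : ∀ v ∈ B, ∀ r : ℕ, ‖h r v‖ ≤ 2 * C * (K * ρ ^ r) := by
    intro v hv r
    have k1 := key r _ (hre v hv).1
    have k2 := key r _ (hre v hv).2
    have l1 := hlog _ (k1.trans (hKρK r))
    have l2 := hlog _ (k2.trans (hKρK r))
    have hC := hC0.le
    calc ‖h r v‖ ≤ ‖Complex.log (1 - qpow τ ((r : ℂ) + 1) *
            Complex.exp (2 * (Real.pi : ℂ) * I * v))‖ +
          ‖Complex.log (1 - qpow τ ((r : ℂ) + 1) *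
            Complex.exp (-(2 * (Real.pi : ℂ) * I * v)))‖ := norm_add_le _ _
      _ ≤ C * (K * ρ ^ r) + C * (K * ρ ^ r) := by
          refine add_le_add (l1.trans ?_) (l2.trans ?_) <;>
            exact mul_le_mul_of_nonneg_left (by assumption) hC
      _ = 2 * C * (K * ρ ^ r) := by ring
  have hslit : ∀ (r : ℕ) (v : ℂ), v ∈ B →
      (1 - qpow τ ((r : ℂ) + 1) * Complex.exp (2 * (Real.pi : ℂ) * I * v)) ∈
        Complex.slitPlane ∧
      (1 - qpow τ ((r : ℂ) + 1) * Complex.exp (-(2 * (Real.pi : ℂ) * I * v))) ∈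
        Complex.slitPlane := by
    intro r v hv
    have k1 := (key r _ (hre v hv).1).trans (hKρK r)
    have k2 := (key r _ (hre v hv).2).trans (hKρK r)
    constructor <;>
    · rw [Complex.mem_slitPlane_iff]
      left
      rw [Complex.sub_re, Complex.one_re]
      have hre1 := Complex.re_le_norm (qpow τ ((r : ℂ) + 1) *
        Complex.exp (2 * (Real.pi : ℂ) * I * v))
      have hre2 := Complex.re_le_norm (qpow τ ((r : ℂ) + 1) *
        Complex.exp (-(2 * (Real.pi : ℂ) * I * v)))
      linarith
  have hLcont : ContinuousOn L B := by
    refine continuousOn_tsum (fun r => ?_) hu (fun n v hv => hb v hv n)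
    have hc1 : Continuous fun v : ℂ =>
        (1 : ℂ) - qpow τ ((r : ℂ) + 1) * Complex.exp (2 * (Real.pi : ℂ) * I * v) := by
      fun_prop
    have hc2 : Continuous fun v : ℂ =>
        (1 : ℂ) - qpow τ ((r : ℂ) + 1) * Complex.exp (-(2 * (Real.pi : ℂ) * I * v)) := by
      fun_prop
    exact (hc1.continuousOn.clog fun v hv => (hslit r v hv).1).add
      (hc2.continuousOn.clog fun v hv => (hslit r v hv).2)
  have hsumv : ∀ v ∈ B, Summable fun r : ℕ => h r v := fun v hv =>
    Summable.of_norm_bounded hu (hb v hv)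
  have hPv : ∀ v ∈ B,
      (∏' r : ℕ, ((1 - qpow τ ((r : ℂ) + 1) * Complex.exp (2 * Real.pi * I * v)) *
        (1 - qpow τ ((r : ℂ) + 1) * Complex.exp (-(2 * Real.pi * I * v))))) =
      Complex.exp (L v) := by
    intro v hv
    have hs := (hsumv v hv).hasSum
    have h2 := hs.cexp
    have heq : (cexp ∘ fun r : ℕ => h r v) = fun r : ℕ =>
        ((1 - qpow τ ((r : ℂ) + 1) * Complex.exp (2 * Real.pi * I * v)) *
          (1 - qpow τ ((r : ℂ) + 1) * Complex.exp (-(2 * Real.pi * I * v)))) := by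
      funext r
      have k1 := (key r _ (hre v hv).1).trans (hKρK r)
      have k2 := (key r _ (hre v hv).2).trans (hKρK r)
      show cexp (h r v) = _
      simp only [hhdef]
      rw [Complex.exp_add, Complex.exp_log (hne _ k1), Complex.exp_log (hne _ k2)]
    rw [heq] at h2
    exact h2.tprod_eq
  have hB0 : (0 : ℂ) ∈ B := Metric.mem_ball_self (by positivity)
  have hL0 : L 0 = 2 * S := by
    have hcongr : ∀ r : ℕ, h r 0 = 2 * Complex.log (1 - qpow τ ((r : ℂ) + 1)) := by
      intro r
      simp only [hhdef, mul_zero, neg_zero, Complex.exp_zero, mul_one, two_mul]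
    show (∑' r : ℕ, h r 0) = 2 * S
    rw [tsum_congr hcongr, tsum_mul_left, ← hSdef]
  -- derivative of sin (π v) at 0
  have hsin : HasDerivAt (fun w : ℂ => Complex.sin ((Real.pi : ℂ) * w)) ((Real.pi : ℂ)) 0 := by
    have h1 : HasDerivAt (fun w : ℂ => (Real.pi : ℂ) * w) ((Real.pi : ℂ)) 0 := by
      simpa using (hasDerivAt_id (0 : ℂ)).const_mul ((Real.pi : ℂ))
    have h2 := (Complex.hasDerivAt_sin ((Real.pi : ℂ) * 0)).comp 0 h1
    simpa [Function.comp_def] using h2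
  have hslope := hasDerivAt_iff_tendsto_slope.mp hsin
  have hLat : ContinuousAt L 0 := hLcont.continuousAt hBmem
  have hexpL : Filter.Tendsto (fun v => Complex.exp (L v)) (𝓝 0) (𝓝 (Complex.exp (L 0))) :=
    Complex.continuous_exp.continuousAt.comp hLat
  have T : Filter.Tendsto
      (fun v : ℂ => (Complex.exp S * qpow τ (1 / 8) * 2) *
        slope (fun w => Complex.sin ((Real.pi : ℂ) * w)) 0 v * Complex.exp (L v))
      (𝓝[≠] (0 : ℂ))
      (𝓝 ((Complex.exp S * qpow τ (1 / 8) * 2) * (Real.pi : ℂ) * Complex.exp (L 0))) :=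
    (tendsto_const_nhds.mul hslope).mul (hexpL.mono_left nhdsWithin_le_nhds)
  rw [hasDerivAt_iff_tendsto_slope]
  have hval : 2 * (Real.pi : ℂ) * qpow τ (1 / 8) * (∏' r : ℕ, (1 - qpow τ ((r : ℂ) + 1)) ^ 3) =
      (Complex.exp S * qpow τ (1 / 8) * 2) * (Real.pi : ℂ) * Complex.exp (L 0) := by
    rw [hprod3.tprod_eq, hL0, show (3 : ℂ) * S = S + 2 * S by ring, Complex.exp_add]
    ring
  rw [hval]
  refine T.congr' ?_
  filter_upwards [self_mem_nhdsWithin, mem_nhdsWithin_of_mem_nhds hBmem] with v hv hvB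
  have hv0 : v ≠ 0 := hv
  rw [slope_def_field, slope_def_field]
  have hf0 : jTheta 0 τ = 0 := by simp [jTheta]
  rw [hf0, jTheta, hcInf, hPv v hvB]
  simp only [Complex.sin_zero, sub_zero, mul_zero]
  field_simp
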